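/- Let n be even and let C ⊆ F₂ⁿ be a linear code of dimension k ≥ n/2 in which every codeword has even Hamming weight. Then the following are equivalent: (1) C contains its dual code C^⊥ = { y ∈ F₂ⁿ : x·y ≡ 0 (mod 2) for all x ∈ C }; (2) C contains a self-dual subcode, i.e. a linear subspace C_s ⊆ C with dim C_s = n/2 such that x·y ≡ 0 (mod 2) for all x, y ∈ C_s; (3) every y ∈ F₂ⁿ with y ∉ C satisfies |{ x ∈ C : x·y ≡ 0 (mod 2) }| = |{ x ∈ C : x·y ≡ 1 (mod 2) }|. -/

import Mathlib

noncomputable section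

/-- Hamming weight of a binary vector. -/
def wHam {n : ℕ} (a : Fin n → ZMod 2) : ℕ := ∑ i, (a i).val

/-- Integer dot product of the 0/1 representatives of two binary vectors. -/
def dotN {n : ℕ} (a b : Fin n → ZMod 2) : ℕ := ∑ i, (a i).val * (b i).val

namespace EvenCodeAux

open Module LinearMap

/-- The dot-product bilinear form on `F₂ⁿ`. -/
def bform (n : ℕ) : LinearMap.BilinForm (ZMod 2) (Fin n → ZMod 2) :=
  LinearMap.mk₂ (ZMod 2) (fun x y => ∑ i, x i * y i)
    (fun x x' y => by simp [add_mul, Finset.sum_add_distrib])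
    (fun c x y => by simp [Finset.mul_sum, mul_assoc])
    (fun x y y' => by simp [mul_add, Finset.sum_add_distrib])
    (fun c x y => by simp [Finset.mul_sum, mul_left_comm])

lemma bform_apply {n : ℕ} (x y : Fin n → ZMod 2) : bform n x y = ∑ i, x i * y i := rfl

lemma cast_dotN {n : ℕ} (x y : Fin n → ZMod 2) :
    ((dotN x y : ℕ) : ZMod 2) = bform n x y := by
  simp [dotN, bform_apply, ZMod.natCast_val, ZMod.cast_id]

lemma dvd_iff {n : ℕ} (x y : Fin n → ZMod 2) : 2 ∣ dotN x y ↔ bform n x y = 0 := by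
  rw [← cast_dotN, ZMod.natCast_eq_zero_iff]

lemma bform_comm {n : ℕ} (x y : Fin n → ZMod 2) : bform n x y = bform n y x := by
  simp [bform_apply, mul_comm]

lemma bform_refl {n : ℕ} : (bform n).IsRefl := fun x y h => by rw [bform_comm]; exact h

lemma bform_self {n : ℕ} (x : Fin n → ZMod 2) (h : Even (wHam x)) : bform n x x = 0 := by
  have h2 : ∀ a : ZMod 2, a * a = a := by decide
  have : ((wHam x : ℕ) : ZMod 2) = bform n x x := by
    simp [wHam, bform_apply, h2, ZMod.natCast_val, ZMod.cast_id]
  rw [← this, ZMod.natCast_eq_zero_iff]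
  exact h.two_dvd

lemma bform_nondeg {n : ℕ} : (bform n).Nondegenerate := by
  refine (LinearMap.IsRefl.nondegenerate_iff_separatingLeft bform_refl).mpr ?_
  intro x hx
  funext i
  have := hx (Pi.single i 1)
  rw [bform_apply] at this
  simpa [Pi.single_apply, mul_ite, Finset.sum_ite_eq'] using this

lemma finrank_space (n : ℕ) : finrank (ZMod 2) (Fin n → ZMod 2) = n := by
  simp [Module.finrank_pi]

lemma finrank_orth {n : ℕ} (W : Submodule (ZMod 2) (Fin n → ZMod 2)) :
    finrank (ZMod 2) ((bform n).orthogonal W) = n - finrank (ZMod 2) W := by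
  rw [LinearMap.BilinForm.finrank_orthogonal bform_nondeg, finrank_space]

lemma orth_orth {n : ℕ} (W : Submodule (ZMod 2) (Fin n → ZMod 2)) :
    (bform n).orthogonal ((bform n).orthogonal W) = W :=
  LinearMap.BilinForm.orthogonal_orthogonal bform_nondeg bform_refl W

lemma orth_sup {n : ℕ} (A B : Submodule (ZMod 2) (Fin n → ZMod 2)) :
    (bform n).orthogonal (A ⊔ B) = (bform n).orthogonal A ⊓ (bform n).orthogonal B := by
  apply le_antisymm
  · exact le_inf (LinearMap.BilinForm.orthogonal_le le_sup_left)
      (LinearMap.BilinForm.orthogonal_le le_sup_right)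
  · rintro y ⟨hyA, hyB⟩ z hz
    rcases Submodule.mem_sup.mp hz with ⟨a, ha, b, hb, rfl⟩
    have h1 := hyA a ha
    have h2 := hyB b hb
    rw [map_add, LinearMap.add_apply, h1, h2, add_zero]

/-- Half-half counting when some codeword is non-orthogonal to `y`. -/
lemma half_count {n : ℕ} (C : Submodule (ZMod 2) (Fin n → ZMod 2))
    (y x₀ : Fin n → ZMod 2) (hx₀ : x₀ ∈ C) (h1 : bform n x₀ y ≠ 0) :
    {x : Fin n → ZMod 2 | x ∈ C ∧ 2 ∣ dotN x y}.ncard =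
      {x : Fin n → ZMod 2 | x ∈ C ∧ ¬ 2 ∣ dotN x y}.ncard := by
  have hchar : ∀ z : Fin n → ZMod 2, z + x₀ + x₀ = z := by
    intro z; funext i
    have : ∀ a b : ZMod 2, a + b + b = a := by decide
    simp [this]
  have hswap : ∀ x, bform n (x + x₀) y = bform n x y + bform n x₀ y := by
    intro x; rw [map_add, LinearMap.add_apply]
  have hone : ∀ a : ZMod 2, a ≠ 0 → a = 1 := by decide
  have h1' : bform n x₀ y = 1 := hone _ h1
  have hflip : ∀ x : Fin n → ZMod 2, (bform n (x + x₀) y = 0 ↔ bform n x y ≠ 0) := by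
    intro x
    rw [hswap, h1']
    have : ∀ a : ZMod 2, a + 1 = 0 ↔ a ≠ 0 := by decide
    exact this _
  have himg : (fun x => x + x₀) '' {x : Fin n → ZMod 2 | x ∈ C ∧ 2 ∣ dotN x y} =
      {x : Fin n → ZMod 2 | x ∈ C ∧ ¬ 2 ∣ dotN x y} := by
    ext z
    simp only [Set.mem_image, Set.mem_setOf_eq, dvd_iff]
    constructor
    · rintro ⟨x, ⟨hxC, hx0⟩, rfl⟩
      exact ⟨C.add_mem hxC hx₀, by rw [hswap, h1', hx0]; decide⟩
    · rintro ⟨hzC, hz⟩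
      exact ⟨z + x₀, ⟨C.add_mem hzC hx₀, (hflip z).mpr hz⟩, hchar z⟩
  rw [← himg]
  exact (Set.ncard_image_of_injective _ (add_left_injective x₀)).symm

/-- Extending a self-orthogonal subcode containing `C^⊥` up to dimension `m = n/2`. -/
lemma extend {n m : ℕ} (hm : n = m + m) (C : Submodule (ZMod 2) (Fin n → ZMod 2))
    (heven : ∀ x ∈ C, bform n x x = 0) :
    ∀ (j : ℕ) (Cs : Submodule (ZMod 2) (Fin n → ZMod 2)),
      (bform n).orthogonal C ≤ Cs → Cs ≤ C → Cs ≤ (bform n).orthogonal Cs →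
      finrank (ZMod 2) Cs + j = m →
      ∃ Cs', Cs' ≤ C ∧ finrank (ZMod 2) Cs' = m ∧ Cs' ≤ (bform n).orthogonal Cs' := by
  intro j
  induction j with
  | zero => exact fun Cs h1 h2 h3 h4 => ⟨Cs, h2, by omega, h3⟩
  | succ j ih =>
    intro Cs h1 h2 h3 h4
    have hWeq : (bform n).orthogonal Cs ⊓ C = (bform n).orthogonal Cs := by
      have h' : (bform n).orthogonal Cs ⊓ C
          = (bform n).orthogonal (Cs ⊔ (bform n).orthogonal C) := by
        rw [orth_sup, orth_orth]
      rw [h', sup_eq_left.mpr h1]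
    have hle : finrank (ZMod 2) Cs ≤ n := by
      have := Submodule.finrank_le Cs
      rwa [finrank_space] at this
    have hd : finrank (ZMod 2) Cs < finrank (ZMod 2) ↥((bform n).orthogonal Cs ⊓ C) := by
      rw [hWeq, finrank_orth]; omega
    have hCsW : Cs ≤ (bform n).orthogonal Cs ⊓ C := le_inf h3 h2
    have hlt : Cs < (bform n).orthogonal Cs ⊓ C :=
      lt_of_le_of_ne hCsW (fun heq => by rw [← heq] at hd; omega)
    obtain ⟨v, hvW, hvCs⟩ := SetLike.exists_of_lt hlt
    have hv0 : v ≠ 0 := fun h => hvCs (h ▸ Cs.zero_mem)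
    have hinf : Cs ⊓ ((ZMod 2) ∙ v) = ⊥ := by
      rw [eq_bot_iff]
      rintro z ⟨hz1, hz2⟩
      rcases Submodule.mem_span_singleton.mp hz2 with ⟨c, rfl⟩
      rcases (by decide : ∀ c : ZMod 2, c = 0 ∨ c = 1) c with hc | hc
      · simp [hc]
      · exact absurd (by simpa [hc] using hz1) hvCs
    have hrank : finrank (ZMod 2) ((Cs ⊔ ((ZMod 2) ∙ v) : Submodule (ZMod 2) (Fin n → ZMod 2)))
        = finrank (ZMod 2) Cs + 1 := by
      have := Submodule.finrank_sup_add_finrank_inf_eq Cs ((ZMod 2) ∙ v)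
      rw [hinf, finrank_span_singleton hv0] at this
      simpa using this
    have hvOrth : v ∈ (bform n).orthogonal Cs := hvW.1
    have hvC : v ∈ C := hvW.2
    have hso : (Cs ⊔ ((ZMod 2) ∙ v)) ≤ (bform n).orthogonal (Cs ⊔ ((ZMod 2) ∙ v)) := by
      intro z hz w hw
      rcases Submodule.mem_sup.mp hz with ⟨a', ha', b', hb', rfl⟩
      rcases Submodule.mem_span_singleton.mp hb' with ⟨c', rfl⟩
      rcases Submodule.mem_sup.mp hw with ⟨a, ha, b, hb, rfl⟩
      rcases Submodule.mem_span_singleton.mp hb with ⟨c, rfl⟩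
      have e1 : bform n a a' = 0 := (h3 ha') a ha
      have e2 : bform n a v = 0 := hvOrth a ha
      have e3 : bform n v a' = 0 := by rw [bform_comm]; exact hvOrth a' ha'
      have e4 : bform n v v = 0 := heven v hvC
      show bform n (a + c • v) (a' + c' • v) = 0
      simp [map_add, map_smul, LinearMap.add_apply, LinearMap.smul_apply, smul_eq_mul,
        e1, e2, e3, e4]
    exact ih (Cs ⊔ ((ZMod 2) ∙ v)) (le_trans h1 le_sup_left)
      (sup_le h2 ((Submodule.span_singleton_le_iff_mem v C).mpr hvC)) hso (by omega)

end EvenCodeAux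

open EvenCodeAux Module in
/-- For an even-weight binary linear code `C ⊆ F₂ⁿ` of dimension `k ≥ n/2` (with `n`
even), the following are equivalent: (1) `C` contains its dual; (2) `C` contains a
self-dual subcode of dimension `n/2`; (3) every `y ∉ C` is orthogonal to exactly half
of the codewords of `C`. -/
theorem even_code_selfdual_tfae (n : ℕ) (hn : Even n)
    (C : Submodule (ZMod 2) (Fin n → ZMod 2))
    (hk : n ≤ 2 * Module.finrank (ZMod 2) C)
    (heven : ∀ x ∈ C, Even (wHam x)) :
    ((∀ y : Fin n → ZMod 2, (∀ x ∈ C, 2 ∣ dotN x y) → y ∈ C) ↔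
      (∃ Cs : Submodule (ZMod 2) (Fin n → ZMod 2), Cs ≤ C ∧
        2 * Module.finrank (ZMod 2) Cs = n ∧
        ∀ x ∈ Cs, ∀ y ∈ Cs, 2 ∣ dotN x y)) ∧
    ((∃ Cs : Submodule (ZMod 2) (Fin n → ZMod 2), Cs ≤ C ∧
        2 * Module.finrank (ZMod 2) Cs = n ∧
        ∀ x ∈ Cs, ∀ y ∈ Cs, 2 ∣ dotN x y) ↔
      (∀ y : Fin n → ZMod 2, y ∉ C →
        {x : Fin n → ZMod 2 | x ∈ C ∧ 2 ∣ dotN x y}.ncard =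
          {x : Fin n → ZMod 2 | x ∈ C ∧ ¬ 2 ∣ dotN x y}.ncard)) := by
  obtain ⟨m, hm⟩ := hn
  have hkn : finrank (ZMod 2) C ≤ n := by
    have := Submodule.finrank_le C
    rwa [finrank_space] at this
  have heven' : ∀ x ∈ C, bform n x x = 0 := fun x hx => bform_self x (heven x hx)
  -- (1) → (2)
  have h12 : (∀ y : Fin n → ZMod 2, (∀ x ∈ C, 2 ∣ dotN x y) → y ∈ C) →
      (∃ Cs : Submodule (ZMod 2) (Fin n → ZMod 2), Cs ≤ C ∧
        2 * Module.finrank (ZMod 2) Cs = n ∧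
        ∀ x ∈ Cs, ∀ y ∈ Cs, 2 ∣ dotN x y) := by
    intro h1
    have hoC : (bform n).orthogonal C ≤ C := by
      intro y hy
      exact h1 y fun x hx => (dvd_iff x y).mpr (hy x hx)
    have hself : (bform n).orthogonal C ≤ (bform n).orthogonal ((bform n).orthogonal C) :=
      fun y hy w hw => hy w (hoC hw)
    have hfr : finrank (ZMod 2) ((bform n).orthogonal C) = n - finrank (ZMod 2) C :=
      finrank_orth C
    obtain ⟨Cs', hCs'C, hCs'rank, hCs'so⟩ :=
      extend hm C heven' (finrank (ZMod 2) C - m) ((bform n).orthogonal C)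
        le_rfl hoC hself (by omega)
    exact ⟨Cs', hCs'C, by omega, fun x hx y hy => (dvd_iff x y).mpr ((hCs'so hy) x hx)⟩
  -- (2) → (1)
  have h21 : (∃ Cs : Submodule (ZMod 2) (Fin n → ZMod 2), Cs ≤ C ∧
        2 * Module.finrank (ZMod 2) Cs = n ∧
        ∀ x ∈ Cs, ∀ y ∈ Cs, 2 ∣ dotN x y) →
      (∀ y : Fin n → ZMod 2, (∀ x ∈ C, 2 ∣ dotN x y) → y ∈ C) := by
    rintro ⟨Cs, hCsC, hrank, hso⟩ y hy
    have hso' : Cs ≤ (bform n).orthogonal Cs :=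
      fun z hz x hx => (dvd_iff x z).mp (hso x hx z hz)
    have heq : Cs = (bform n).orthogonal Cs := by
      apply Submodule.eq_of_le_of_finrank_le hso'
      rw [finrank_orth]; omega
    have hyC : y ∈ (bform n).orthogonal C :=
      fun x hx => (dvd_iff x y).mp (hy x hx)
    have : (bform n).orthogonal C ≤ (bform n).orthogonal Cs :=
      LinearMap.BilinForm.orthogonal_le hCsC
    exact hCsC (heq ▸ this hyC)
  -- (1) → (3)
  have h13 : (∀ y : Fin n → ZMod 2, (∀ x ∈ C, 2 ∣ dotN x y) → y ∈ C) →
      (∀ y : Fin n → ZMod 2, y ∉ C →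
        {x : Fin n → ZMod 2 | x ∈ C ∧ 2 ∣ dotN x y}.ncard =
          {x : Fin n → ZMod 2 | x ∈ C ∧ ¬ 2 ∣ dotN x y}.ncard) := by
    intro h1 y hyC
    have : ¬ ∀ x ∈ C, 2 ∣ dotN x y := fun h => hyC (h1 y h)
    push_neg at this
    obtain ⟨x₀, hx₀C, hx₀⟩ := this
    exact half_count C y x₀ hx₀C (fun h => hx₀ ((dvd_iff x₀ y).mpr h))
  -- (3) → (1)
  have h31 : (∀ y : Fin n → ZMod 2, y ∉ C →
        {x : Fin n → ZMod 2 | x ∈ C ∧ 2 ∣ dotN x y}.ncard =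
          {x : Fin n → ZMod 2 | x ∈ C ∧ ¬ 2 ∣ dotN x y}.ncard) →
      (∀ y : Fin n → ZMod 2, (∀ x ∈ C, 2 ∣ dotN x y) → y ∈ C) := by
    intro h3 y hy
    by_contra hyC
    have hcount := h3 y hyC
    have hempty : {x : Fin n → ZMod 2 | x ∈ C ∧ ¬ 2 ∣ dotN x y} = ∅ := by
      ext x; simp only [Set.mem_setOf_eq, Set.mem_empty_iff_false, iff_false, not_and, not_not]
      exact fun hx => hy x hx
    rw [hempty, Set.ncard_empty] at hcount
    have hmem : (0 : Fin n → ZMod 2) ∈ {x : Fin n → ZMod 2 | x ∈ C ∧ 2 ∣ dotN x y} :=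
      ⟨C.zero_mem, by simp [dotN]⟩
    have hfin : {x : Fin n → ZMod 2 | x ∈ C ∧ 2 ∣ dotN x y}.Finite :=
      Set.toFinite _
    rw [Set.ncard_eq_zero hfin] at hcount
    rw [hcount] at hmem
    exact hmem
  exact ⟨⟨h12, h21⟩, ⟨fun h2 => h13 (h21 h2), fun h3 => h12 (h31 h3)⟩⟩

end
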